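/- If a lens satisfies both the SourceStability law (∀ s ∈ S, ∃ v ∈ V, Put(s, v) = s) and the ViewDetermination law (∀ s s' ∈ S, ∀ v v' ∈ V, Put(s, v) = Put(s', v') implies v = v'), then it satisfies the PutTwice law (∀ s ∈ S, ∀ v ∈ V, Put(Put(s, v), v) = Put(s, v)). -/
import Mathlib

/-- SourceStability and ViewDetermination imply PutTwice. -/
theorem sourceStability_viewDetermination_implies_putTwice {S V : Type*} (Put : S → V → S)
    (hSS : ∀ s : S, ∃ v : V, Put s v = s)
    (hVD : ∀ s s' : S, ∀ v v' : V, Put s v = Put s' v' → v = v') :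
    ∀ s : S, ∀ v : V, Put (Put s v) v = Put s v := by
  intro s v
  obtain ⟨w, hw⟩ := hSS (Put s v)
  have : w = v := hVD (Put s v) s w v (by rw [hw])
  rw [this] at hw; exact hw
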